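/- In the Migliore construction, with I_1 = ⟨x_0, J⟩ the ideal of Γ_1 and I_2 = ⟨∏_{i=1}^{β}(u_i x_0 − x_1), x_2 − x_0, …, x_n − x_0⟩ the ideal of Γ_2, one has I_1 + I_2 = ⟨x_0, x_1^t, x_2, …, x_n⟩, where t = min{v, β} and v is determined by ⟨J, x_2,…,x_n⟩ = ⟨x_1^v, x_2,…,x_n⟩. In particular I_1 + I_2 is a complete intersection of codimension n + 1. -/

import Mathlib

open MvPolynomial

noncomputable section

namespace PointsMinDist

variable {K : Type} [Field K]

/-- The (homogeneous) vanishing ideal of a set of points of projective space: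
all polynomials vanishing at every representative vector of every point. -/
def vanishingIdeal {m : ℕ} (Γ : Set (Projectivization K (Fin m → K))) :
    Ideal (MvPolynomial (Fin m) K) where
  carrier := {f | ∀ P ∈ Γ, ∀ (v : Fin m → K) (hv : v ≠ 0),
      Projectivization.mk K v hv = P → MvPolynomial.eval v f = 0}
  zero_mem' := by intro P hP v hv h; simp
  add_mem' := by
    intro f g hf hg P hP v hv h
    simp [hf P hP v hv h, hg P hP v hv h]
  smul_mem' := by
    intro c f hf P hP v hv h
    simp [smul_eq_mul, hf P hP v hv h]

/-- The degree-`d` graded component of a (homogeneous) ideal, as a `K`-subspace. -/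
def degPart {m : ℕ} (I : Ideal (MvPolynomial (Fin m) K)) (d : ℕ) :
    Submodule K (MvPolynomial (Fin m) K) :=
  Submodule.restrictScalars K I ⊓ homogeneousSubmodule (Fin m) K d

/-- `K`-dimension of the degree-`d` component of an ideal. -/
def hdim {m : ℕ} (I : Ideal (MvPolynomial (Fin m) K)) (d : ℕ) : ℕ :=
  Module.finrank K (degPart I d)

/-- Hilbert function of `R/I` in degree `d`. -/
def HF {m : ℕ} (I : Ideal (MvPolynomial (Fin m) K)) (d : ℕ) : ℕ :=
  Module.finrank K (homogeneousSubmodule (Fin m) K d) - hdim I d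

open Classical in
/-- `hyp Γ`: the maximum number of points of `Γ` contained in a hyperplane. -/
def hyp {m : ℕ} (Γ : Finset (Projectivization K (Fin m → K))) : ℕ :=
  sSup {k | ∃ φ : Module.Dual K (Fin m → K), φ ≠ 0 ∧
    k = (Γ.filter fun P => φ P.rep = 0).card}

/-- the minimum distance `d(Γ) = |Γ| - hyp(Γ)`. -/
def minDist {m : ℕ} (Γ : Finset (Projectivization K (Fin m → K))) : ℕ :=
  Γ.card - hyp Γ

/-- `Γ` is non-degenerate: it is not contained in any hyperplane. -/
def Nondeg {m : ℕ} (Γ : Finset (Projectivization K (Fin m → K))) : Prop :=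
  ∀ φ : Module.Dual K (Fin m → K), (∀ P ∈ Γ, φ P.rep = 0) → φ = 0

/-- The higher minimum distance `d(Γ)ₐ = |Γ| - max{|Γ'| : Γ' ⊆ Γ, dim I(Γ')ₐ > dim I(Γ)ₐ}`. -/
def higherD {m : ℕ} (Γ : Finset (Projectivization K (Fin m → K))) (a : ℕ) : ℕ :=
  Γ.card - sSup {k | ∃ Γ' ⊆ Γ,
    hdim (vanishingIdeal (Γ' : Set (Projectivization K (Fin m → K)))) a >
      hdim (vanishingIdeal (Γ : Set (Projectivization K (Fin m → K)))) a ∧ k = Γ'.card}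

open Classical in
/-- The degree `δ(P)` of a point `P` in `Γ`: the least degree in which the ideal
of `Γ \ {P}` is strictly bigger than the ideal of `Γ`. -/
def pointDegree {m : ℕ} (Γ : Finset (Projectivization K (Fin m → K)))
    (P : Projectivization K (Fin m → K)) : ℕ :=
  sInf {d | hdim (vanishingIdeal ((Γ.erase P) : Set (Projectivization K (Fin m → K)))) d >
    hdim (vanishingIdeal (Γ : Set (Projectivization K (Fin m → K)))) d}

/-- A graded minimal free resolution
`0 → F_len → ⋯ → F_1 → R → R/I → 0` of `R/I`, `R = K[x_0,…,x_{N-1}]`.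
`F_j = ⊕_{i : Fin (rk j)} R(-(twist j i))` for `1 ≤ j ≤ len`.
The differential `F_1 → R` is given by `gen` (so that its image is `I`) and the
differential `F_{j+2} → F_{j+1}` is given (in matrix form, rows indexed by the
target) by `mat j`.  All entries are homogeneous of the appropriate degrees, and
minimality means all entries lie in the irrelevant maximal ideal
(zero constant coefficient). -/
structure MinFreeRes (N : ℕ) (K : Type) [Field K] (I : Ideal (MvPolynomial (Fin N) K)) where
  len : ℕ
  rk : ℕ → ℕ
  twist : (j : ℕ) → Fin (rk j) → ℕ
  gen : Fin (rk 1) → MvPolynomial (Fin N) K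
  mat : (j : ℕ) → Matrix (Fin (rk (j + 1))) (Fin (rk (j + 2))) (MvPolynomial (Fin N) K)
  rk_len_pos : 0 < rk len
  rk_eq_zero : ∀ j, len < j → rk j = 0
  gen_hom : ∀ i, (gen i).IsHomogeneous (twist 1 i)
  gen_min : ∀ i, constantCoeff (gen i) = 0
  gen_span : Ideal.span (Set.range gen) = I
  mat_hom : ∀ j i i', mat j i i' = 0 ∨
    ∃ d, (mat j i i').IsHomogeneous d ∧ d + twist (j + 1) i = twist (j + 2) i'
  mat_min : ∀ j i i', constantCoeff (mat j i i') = 0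
  exact_one : ∀ v : Fin (rk 1) → MvPolynomial (Fin N) K,
    (∑ i, v i * gen i = 0) ↔ v ∈ LinearMap.range (mat 0).mulVecLin
  exact_rest : ∀ j, LinearMap.ker (mat j).mulVecLin = LinearMap.range (mat (j + 1)).mulVecLin

/-- `a(Γ)`: the minimal twist `min_i {a_i}` occurring in the last module
`F_len = ⊕ R(-a_i)` of the minimal free resolution. -/
def MinFreeRes.aMin {N : ℕ} {K : Type} [Field K] {I : Ideal (MvPolynomial (Fin N) K)}
    (res : MinFreeRes N K I) : ℕ :=
  Finset.univ.inf'
    (Finset.univ_nonempty_iff.mpr (Fin.pos_iff_nonempty.mp res.rk_len_pos))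
    (fun i => res.twist res.len i)

/-- The minimum socle degree `A_n = min_i {a_i - n}` (here `n = len`, the length of
the resolution). -/
def MinFreeRes.A {N : ℕ} {K : Type} [Field K] {I : Ideal (MvPolynomial (Fin N) K)}
    (res : MinFreeRes N K I) : ℤ :=
  (res.aMin : ℤ) - res.len


/-- Embedding of points of `P^{m-1}` into the hyperplane `x_0 = 0` of `P^m`. -/
def embedPt {m : ℕ} (P : Projectivization K (Fin m → K)) :
    Projectivization K (Fin (m + 1) → K) :=
  Projectivization.mk K (Fin.cons 0 P.rep) (by
    intro h
    apply P.rep_nonzero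
    funext i
    simpa using congrFun h i.succ)

/-- The point `[1, c, 1, …, 1]` of `P^n` (a point on a line avoiding `x_0 = 0`). -/
def linePt (n : ℕ) (c : K) : Projectivization K (Fin (n + 1) → K) :=
  Projectivization.mk K (fun j => if (j : ℕ) = 1 then c else 1) (by
    intro h
    have h0 := congrFun h 0
    simp at h0)

open Classical in
/-- The set `Γ = Γ₁ ∪ Γ₂` of the Migliore construction: a set `Γ₀` of points of
`P^{n-1}` embedded into the hyperplane `x_0 = 0`, together with the points
`[1, u_i, 1, …, 1]` on a line. -/
def MigGamma {n : ℕ} (Γ₀ : Finset (Projectivization K (Fin n → K)))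
    {β : ℕ} (u : Fin β → K) : Finset (Projectivization K (Fin (n + 1) → K)) :=
  Γ₀.image embedPt ∪ Finset.univ.image (fun i => linePt n (u i))

/-- The ideal `I₁ = ⟨x_0, J⟩ ⊆ R = K[x_0, …, x_n]`, where
`J ⊆ S = K[x_1, …, x_n]` (vars of `S` indexed by `Fin n`, with `X i` of `S`
corresponding to `x_{i+1}` of `R`). -/
def I1 {n : ℕ} (J : Ideal (MvPolynomial (Fin n) K)) :
    Ideal (MvPolynomial (Fin (n + 1)) K) :=
  Ideal.span {X 0} ⊔ Ideal.map (rename (Fin.succ : Fin n → Fin (n + 1))) J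

/-- The polynomial `∏_{i=1}^β (u_i x_0 - x_1)`. -/
def prodPoly (n β : ℕ) (u : Fin β → K) : MvPolynomial (Fin (n + 1)) K :=
  ∏ i : Fin β, (C (u i) * X 0 - X 1)

/-- The ideal `I₂ = ⟨∏ (u_i x_0 - x_1), x_2 - x_0, …, x_n - x_0⟩` of the `β`
points `[1, u_i, 1, …, 1]` on a line. -/
def I2 (n β : ℕ) (u : Fin β → K) : Ideal (MvPolynomial (Fin (n + 1)) K) :=
  Ideal.span ({prodPoly n β u} ∪
    {f | ∃ j : Fin (n + 1), 2 ≤ (j : ℕ) ∧ f = X j - X 0})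

/-- The sequence `x_0, x_1^t, x_2, …, x_n`. -/
def ciList (K : Type) [Field K] (n t : ℕ) : List (MvPolynomial (Fin (n + 1)) K) :=
  X 0 :: X 1 ^ t :: ((List.finRange (n + 1)).drop 2).map X

/-- The complete intersection ideal `⟨x_0, x_1^t, x_2, …, x_n⟩`. -/
def CIdeal (K : Type) [Field K] (n t : ℕ) : Ideal (MvPolynomial (Fin (n + 1)) K) :=
  Ideal.span {f | f ∈ ciList K n t}

/-- The set `𝒜 = {x_0(x_2 - x_0), …, x_0(x_n - x_0), x_0·∏(u_i x_0 - x_1)}`. -/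
def calA (n β : ℕ) (u : Fin β → K) : Set (MvPolynomial (Fin (n + 1)) K) :=
  {f | ∃ j : Fin (n + 1), 2 ≤ (j : ℕ) ∧ f = X 0 * (X j - X 0)} ∪
    {X 0 * prodPoly n β u}



private lemma isSMulRegular_quot_of {R : Type} [CommRing R] {I : Ideal R} {r : R}
    (h : ∀ f, r * f ∈ I → f ∈ I) :
    IsSMulRegular (R ⧸ (I • ⊤ : Submodule R R)) r := by
  have hI : (I • ⊤ : Submodule R R) = I := by rw [smul_eq_mul, Ideal.mul_top]
  intro x y hxy
  obtain ⟨f, rfl⟩ := Submodule.Quotient.mk_surjective _ x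
  obtain ⟨g, rfl⟩ := Submodule.Quotient.mk_surjective _ y
  simp only at hxy
  rw [← Submodule.Quotient.mk_smul, ← Submodule.Quotient.mk_smul,
    Submodule.Quotient.eq, hI] at hxy
  rw [Submodule.Quotient.eq, hI]
  have : r * (f - g) ∈ I := by rw [mul_sub]; exact hxy
  exact h _ this

private lemma mul_pow_mem_span {m : ℕ} {K : Type} [Field K] (S : Set (Fin m × ℕ))
    (b : Fin m) (d : ℕ) (hb : ∀ p ∈ S, p.1 ≠ b) (f : MvPolynomial (Fin m) K)
    (hf : X b ^ d * f ∈ Ideal.span ((fun p : Fin m × ℕ => X p.1 ^ p.2) '' S)) :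
    f ∈ Ideal.span ((fun p : Fin m × ℕ => X p.1 ^ p.2) '' S) := by
  have himg : ((fun p : Fin m × ℕ => (X p.1 ^ p.2 : MvPolynomial (Fin m) K)) '' S)
      = ((fun s => monomial s (1 : K)) ''
        ((fun p : Fin m × ℕ => Finsupp.single p.1 p.2) '' S)) := by
    rw [Set.image_image]
    exact Set.image_congr fun p _ => X_pow_eq_monomial
  rw [himg, mem_ideal_span_monomial_image] at hf ⊢
  intro xi hxi
  have hxi' : Finsupp.single b d + xi ∈ (X (R := K) b ^ d * f).support := by
    rw [mem_support_iff, X_pow_eq_monomial, coeff_monomial_mul, one_mul]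
    exact mem_support_iff.mp hxi
  obtain ⟨si, hsi, hle⟩ := hf _ hxi'
  refine ⟨si, hsi, ?_⟩
  obtain ⟨p, hp, rfl⟩ := hsi
  rw [Finsupp.single_le_iff] at hle ⊢
  rwa [Finsupp.add_apply, Finsupp.single_eq_of_ne' (Ne.symm (hb p hp)), zero_add] at hle

private lemma monList_regular {m : ℕ} {K : Type} [Field K] (l : List (Fin m × ℕ))
    (hd : (l.map Prod.fst).Nodup) (he : ∀ p ∈ l, 1 ≤ p.2) :
    RingTheory.Sequence.IsRegular (MvPolynomial (Fin m) K)
      (l.map fun p => (X p.1 ^ p.2 : MvPolynomial (Fin m) K)) := by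
  rw [RingTheory.Sequence.isRegular_iff]
  constructor
  · rw [RingTheory.Sequence.isWeaklyRegular_iff]
    intro i hi
    rw [List.length_map] at hi
    have hget : (l.map fun p : Fin m × ℕ => (X p.1 ^ p.2 : MvPolynomial (Fin m) K))[i]'(by simpa)
        = X (l[i]'hi).1 ^ (l[i]'hi).2 := List.getElem_map _
    have htake : (l.map fun p : Fin m × ℕ => (X p.1 ^ p.2 : MvPolynomial (Fin m) K)).take i
        = (l.take i).map fun p => X p.1 ^ p.2 := List.map_take.symm
    have hofl : Ideal.ofList ((l.take i).map fun p : Fin m × ℕ =>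
          (X p.1 ^ p.2 : MvPolynomial (Fin m) K))
        = Ideal.span ((fun p : Fin m × ℕ =>
          (X p.1 ^ p.2 : MvPolynomial (Fin m) K)) '' {p | p ∈ l.take i}) := by
      show Ideal.span _ = _
      congr 1
      ext f
      simp only [Set.mem_setOf_eq, List.mem_map, Set.mem_image]
    rw [hget, htake, hofl]
    apply isSMulRegular_quot_of
    intro f hf
    refine mul_pow_mem_span _ _ _ ?_ f hf
    rintro p hp
    obtain ⟨k, hk, rfl⟩ := List.mem_iff_getElem.mp hp
    rw [List.getElem_take]
    intro hfst
    have hk' : k < i := lt_of_lt_of_le hk (by simp)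
    have h1 : (l.map Prod.fst)[k]'(by simp; omega) = (l.map Prod.fst)[i]'(by simpa) := by
      rw [List.getElem_map, List.getElem_map]
      exact hfst
    have := List.Nodup.getElem_inj_iff hd |>.mp h1
    omega
  · intro htop
    have hsm : (Ideal.ofList (l.map fun p : Fin m × ℕ =>
          (X p.1 ^ p.2 : MvPolynomial (Fin m) K)) • ⊤ :
          Submodule (MvPolynomial (Fin m) K) (MvPolynomial (Fin m) K))
        = Ideal.ofList (l.map fun p : Fin m × ℕ =>
          (X p.1 ^ p.2 : MvPolynomial (Fin m) K)) := by
      rw [smul_eq_mul, Ideal.mul_top]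
    rw [hsm] at htop
    have hle : Ideal.ofList (l.map fun p : Fin m × ℕ =>
          (X p.1 ^ p.2 : MvPolynomial (Fin m) K))
        ≤ RingHom.ker (eval (fun _ => (0 : K))) := by
      rw [show Ideal.ofList (l.map fun p : Fin m × ℕ =>
          (X p.1 ^ p.2 : MvPolynomial (Fin m) K)) = Ideal.span _ from rfl, Ideal.span_le]
      intro f hf
      obtain ⟨p, hp, rfl⟩ := List.mem_map.mp hf
      rw [SetLike.mem_coe, RingHom.mem_ker, map_pow, eval_X]
      exact zero_pow (by have := he p hp; omega)
    have h1 : (1 : MvPolynomial (Fin m) K) ∈ RingHom.ker (eval (fun _ => (0 : K))) := by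
      apply hle
      rw [← htop]
      trivial
    rw [RingHom.mem_ker, map_one] at h1
    exact one_ne_zero h1

private lemma mem_drop2 {n : ℕ} (j : Fin (n+1)) :
    j ∈ (List.finRange (n+1)).drop 2 ↔ 2 ≤ (j : ℕ) := by
  constructor
  · intro h
    obtain ⟨k, hk, hjk⟩ := List.mem_iff_getElem.mp h
    rw [List.getElem_drop, List.getElem_finRange] at hjk
    have := congrArg Fin.val hjk
    simp at this
    omega
  · intro h
    have hlen : (j : ℕ) - 2 < ((List.finRange (n+1)).drop 2).length := by
      simp; omega
    refine List.mem_iff_getElem.mpr ⟨(j : ℕ) - 2, hlen, ?_⟩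
    rw [List.getElem_drop, List.getElem_finRange]
    ext
    simp
    omega

private lemma ciList_eq {K : Type} [Field K] (n t : ℕ) :
    ciList K n t = ((((0 : Fin (n+1)), 1) :: ((1 : Fin (n+1)), t) ::
      ((List.finRange (n+1)).drop 2).map (fun j => (j, 1))).map
        fun p => (X p.1 ^ p.2 : MvPolynomial (Fin (n+1)) K)) := by
  rw [ciList]
  simp only [List.map_cons, List.map_map, pow_one]
  congr 2
  apply List.map_congr_left
  intro j _
  simp

/-- In the Migliore construction,
`I₁ + I₂ = ⟨x_0, x_1^t, x_2, …, x_n⟩` where `t = min {v, β}`, and this is a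
complete intersection of codimension `n + 1` (the `n + 1` generators form a
regular sequence). -/
theorem migliore_sum_of_ideals
    {K : Type} [Field K] [CharZero K] {n α β : ℕ} (hn : 2 ≤ n)
    (hα : 0 < α) (hβ : 0 < β)
    (Γ₀ : Finset (Projectivization K (Fin n → K)))
    (hcard : Γ₀.card = α)
    (hgen : ∀ i, HF (vanishingIdeal (Γ₀ : Set (Projectivization K (Fin n → K)))) i =
      min ((i + n - 1).choose (n - 1)) α)
    (u : Fin β → K) (hu : Function.Injective u)
    (s : ℕ) (hs : α < (s + n - 1).choose (n - 1))
    (hsmin : ∀ j, α < (j + n - 1).choose (n - 1) → s ≤ j)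
    (v : ℕ) (hvs : v = s ∨ v = s + 1)
    (hv : vanishingIdeal (Γ₀ : Set (Projectivization K (Fin n → K))) ⊔
        Ideal.span {f | ∃ i : Fin n, 1 ≤ (i : ℕ) ∧ f = X i} =
      Ideal.span ({X (⟨0, by omega⟩ : Fin n) ^ v} ∪ {f | ∃ i : Fin n, 1 ≤ (i : ℕ) ∧ f = X i})) :
    I1 (vanishingIdeal (Γ₀ : Set (Projectivization K (Fin n → K)))) ⊔ I2 n β u = CIdeal K n (min v β) ∧
    RingTheory.Sequence.IsRegular (MvPolynomial (Fin (n + 1)) K)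
      (ciList K n (min v β)) ∧
    (ciList K n (min v β)).length = n + 1 := by
  have hval1 : ((1 : Fin (n + 1)) : ℕ) = 1 := by
    rw [Fin.val_one']
    exact Nat.mod_eq_of_lt (by omega)
  have hs1 : 1 ≤ s := by
    by_contra hss
    push_neg at hss
    have hs0 : s = 0 := by omega
    subst hs0
    rw [Nat.zero_add, Nat.choose_self] at hs
    omega
  have hv1 : 1 ≤ v := by rcases hvs with rfl | rfl <;> omega
  have ht1 : 1 ≤ min v β := le_min hv1 hβ
  have hsucc : ∀ i : Fin n, 1 ≤ (i : ℕ) → 2 ≤ ((Fin.succ i : Fin (n + 1)) : ℕ) := by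
    intro i hi
    rw [Fin.val_succ]
    omega
  -- membership in CIdeal
  have hX0CI : (X 0 : MvPolynomial (Fin (n + 1)) K) ∈ CIdeal K n (min v β) :=
    Ideal.subset_span List.mem_cons_self
  have hX1CI : (X 1 ^ (min v β) : MvPolynomial (Fin (n + 1)) K) ∈ CIdeal K n (min v β) :=
    Ideal.subset_span (List.mem_cons.mpr (Or.inr List.mem_cons_self))
  have hXjCI : ∀ j : Fin (n + 1), 2 ≤ (j : ℕ) →
      (X j : MvPolynomial (Fin (n + 1)) K) ∈ CIdeal K n (min v β) := by
    intro j hj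
    refine Ideal.subset_span ?_
    show X j ∈ ciList K n (min v β)
    refine List.mem_cons.mpr (Or.inr (List.mem_cons.mpr (Or.inr ?_)))
    exact List.mem_map.mpr ⟨j, (mem_drop2 j).mpr hj, rfl⟩
  have hX1pow : ∀ w : ℕ, min v β ≤ w →
      (X 1 ^ w : MvPolynomial (Fin (n + 1)) K) ∈ CIdeal K n (min v β) := by
    intro w hw
    have : (X 1 ^ w : MvPolynomial (Fin (n + 1)) K)
        = X 1 ^ (min v β) * X 1 ^ (w - min v β) := by
      rw [← pow_add]
      congr 1
      omega
    rw [this]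
    exact Ideal.mul_mem_right _ _ hX1CI
  have hprod : prodPoly n β u - (- X 1 : MvPolynomial (Fin (n + 1)) K) ^ β ∈
      Ideal.span {(X 0 : MvPolynomial (Fin (n + 1)) K)} := by
    rw [← Ideal.Quotient.eq]
    have h0 : Ideal.Quotient.mk (Ideal.span {(X 0 : MvPolynomial (Fin (n + 1)) K)}) (X 0) = 0 :=
      Ideal.Quotient.eq_zero_iff_mem.mpr (Ideal.subset_span rfl)
    simp [prodPoly, h0, Finset.prod_const]
  have hsum : I1 (vanishingIdeal (Γ₀ : Set (Projectivization K (Fin n → K)))) ⊔ I2 n β u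
      = CIdeal K n (min v β) := by
    apply le_antisymm
    · apply sup_le
      · rw [I1]
        apply sup_le
        · rw [Ideal.span_le]
          rintro f hf
          rw [Set.mem_singleton_iff] at hf
          subst hf
          exact hX0CI
        · refine le_trans (Ideal.map_mono (le_trans le_sup_left (le_of_eq hv))) ?_
          rw [Ideal.map_span, Ideal.span_le]
          rintro f hf
          obtain ⟨g, hg, rfl⟩ := hf
          rcases hg with hg | ⟨i, hi, rfl⟩
          · rw [Set.mem_singleton_iff] at hg
            subst hg
            rw [map_pow, rename_X]
            have h01 : Fin.succ (⟨0, by omega⟩ : Fin n) = (1 : Fin (n + 1)) := by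
              apply Fin.val_injective
              rw [Fin.val_succ, hval1]
            rw [h01]
            exact hX1pow v (min_le_left _ _)
          · rw [rename_X]
            exact hXjCI _ (hsucc i hi)
      · rw [I2, Ideal.span_le]
        rintro f (hf | ⟨j, hj, rfl⟩)
        · rw [Set.mem_singleton_iff] at hf
          subst hf
          have hsplit : prodPoly n β u
              = (prodPoly n β u - (- X 1) ^ β) + (-1) ^ β * X 1 ^ β := by
            rw [neg_pow]
            ring
          rw [hsplit]
          refine Ideal.add_mem _ ?_ (Ideal.mul_mem_left _ _ (hX1pow β (min_le_right _ _)))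
          refine (Ideal.span_le.mpr ?_) hprod
          rintro g hg
          rw [Set.mem_singleton_iff] at hg
          subst hg
          exact hX0CI
        · exact Ideal.sub_mem _ (hXjCI j hj) hX0CI
    · have hX0Sum : (X 0 : MvPolynomial (Fin (n + 1)) K) ∈
          I1 (vanishingIdeal (Γ₀ : Set (Projectivization K (Fin n → K)))) ⊔ I2 n β u :=
        Ideal.mem_sup_left (Ideal.mem_sup_left (Ideal.subset_span rfl))
      have hsubSum : ∀ j : Fin (n + 1), 2 ≤ (j : ℕ) →
          (X j - X 0 : MvPolynomial (Fin (n + 1)) K) ∈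
            I1 (vanishingIdeal (Γ₀ : Set (Projectivization K (Fin n → K)))) ⊔ I2 n β u :=
        fun j hj => Ideal.mem_sup_right (Ideal.subset_span (Or.inr ⟨j, hj, rfl⟩))
      have hXjSum : ∀ j : Fin (n + 1), 2 ≤ (j : ℕ) →
          (X j : MvPolynomial (Fin (n + 1)) K) ∈
            I1 (vanishingIdeal (Γ₀ : Set (Projectivization K (Fin n → K)))) ⊔ I2 n β u := by
        intro j hj
        have := Ideal.add_mem _ (hsubSum j hj) hX0Sum
        simpa using this
      have hprodSum : prodPoly n β u ∈
          I1 (vanishingIdeal (Γ₀ : Set (Projectivization K (Fin n → K)))) ⊔ I2 n β u :=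
        Ideal.mem_sup_right (Ideal.subset_span (Or.inl rfl))
      have hspanX0le : Ideal.span {(X 0 : MvPolynomial (Fin (n + 1)) K)} ≤
          I1 (vanishingIdeal (Γ₀ : Set (Projectivization K (Fin n → K)))) ⊔ I2 n β u := by
        rw [Ideal.span_le]
        rintro g hg
        rw [Set.mem_singleton_iff] at hg
        subst hg
        exact hX0Sum
      rw [CIdeal, Ideal.span_le]
      intro f hf
      have hf' : f ∈ ciList K n (min v β) := hf
      rw [ciList] at hf'
      rcases List.mem_cons.mp hf' with rfl | hf'
      · exact hX0Sum
      rcases List.mem_cons.mp hf' with rfl | hf'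
      · rcases le_total v β with hle | hle
        · rw [min_eq_left hle]
          have h0v : (X (⟨0, by omega⟩ : Fin n)) ^ v ∈
              vanishingIdeal (Γ₀ : Set (Projectivization K (Fin n → K))) ⊔
                Ideal.span {f | ∃ i : Fin n, 1 ≤ (i : ℕ) ∧ f = X i} := by
            rw [hv]
            exact Ideal.subset_span (Or.inl rfl)
          have hmem := Ideal.mem_map_of_mem (rename (Fin.succ : Fin n → Fin (n + 1))) h0v
          rw [Ideal.map_sup] at hmem
          have hmaple : Ideal.map (rename (Fin.succ : Fin n → Fin (n + 1)))
                (vanishingIdeal (Γ₀ : Set (Projectivization K (Fin n → K)))) ⊔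
              Ideal.map (rename (Fin.succ : Fin n → Fin (n + 1)))
                (Ideal.span {f | ∃ i : Fin n, 1 ≤ (i : ℕ) ∧ f = X i}) ≤
              I1 (vanishingIdeal (Γ₀ : Set (Projectivization K (Fin n → K)))) ⊔ I2 n β u := by
            apply sup_le
            · exact le_trans le_sup_right le_sup_left
            · rw [Ideal.map_span, Ideal.span_le]
              rintro g ⟨g', ⟨i, hi, rfl⟩, rfl⟩
              rw [rename_X]
              exact hXjSum _ (hsucc i hi)
          have hXv : (X (1 : Fin (n + 1)) : MvPolynomial (Fin (n + 1)) K) ^ v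
              = rename (Fin.succ : Fin n → Fin (n + 1)) ((X (⟨0, by omega⟩ : Fin n)) ^ v) := by
            rw [map_pow, rename_X]
            congr 2
            apply Fin.val_injective
            rw [Fin.val_succ, hval1]
          rw [hXv]
          exact hmaple hmem
        · rw [min_eq_right hle]
          have hnegSum : ((- X 1 : MvPolynomial (Fin (n + 1)) K)) ^ β ∈
              I1 (vanishingIdeal (Γ₀ : Set (Projectivization K (Fin n → K)))) ⊔ I2 n β u := by
            have heq : ((- X 1 : MvPolynomial (Fin (n + 1)) K)) ^ β
                = prodPoly n β u - (prodPoly n β u - (- X 1) ^ β) := by ring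
            rw [heq]
            exact Ideal.sub_mem _ hprodSum (hspanX0le hprod)
          have heq2 : (X 1 : MvPolynomial (Fin (n + 1)) K) ^ β
              = (-1) ^ β * (- X 1) ^ β := by
            rw [← mul_pow, neg_one_mul, neg_neg]
          rw [heq2]
          exact Ideal.mul_mem_left _ _ hnegSum
      · obtain ⟨j, hjmem, rfl⟩ := List.mem_map.mp hf'
        exact hXjSum j ((mem_drop2 j).mp hjmem)
  refine ⟨hsum, ?_, ?_⟩
  · rw [ciList_eq]
    apply monList_regular
    · have hmap : ((((0 : Fin (n+1)), 1) :: ((1 : Fin (n+1)), min v β) ::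
          ((List.finRange (n+1)).drop 2).map (fun j => (j, 1))).map Prod.fst)
          = (0 : Fin (n+1)) :: (1 : Fin (n+1)) :: (List.finRange (n+1)).drop 2 := by
        simp only [List.map_cons, List.map_map]
        rw [show (Prod.fst ∘ fun j : Fin (n+1) => (j, (1 : ℕ))) = id from rfl, List.map_id]
      rw [hmap]
      refine List.nodup_cons.mpr ⟨?_, List.nodup_cons.mpr ⟨?_, ?_⟩⟩
      · intro hmem
        rcases List.mem_cons.mp hmem with h01 | h0d
        · have h0 : ((0 : Fin (n + 1)) : ℕ) = ((1 : Fin (n + 1)) : ℕ) := congrArg Fin.val h01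
          rw [Fin.val_zero, hval1] at h0
          omega
        · have h2 := (mem_drop2 _).mp h0d
          rw [Fin.val_zero] at h2
          omega
      · intro hmem
        have h2 := (mem_drop2 _).mp hmem
        rw [hval1] at h2
        omega
      · exact (List.drop_sublist _ _).nodup (List.nodup_finRange _)
    · rintro p hp
      rcases List.mem_cons.mp hp with rfl | hp
      · exact le_refl 1
      rcases List.mem_cons.mp hp with rfl | hp
      · exact ht1
      · obtain ⟨j, _, rfl⟩ := List.mem_map.mp hp
        exact le_refl 1
  · simp [ciList]
    omega

end PointsMinDist
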